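/- Let L = U ⊕ U(N) realized as {(a b; c d) ∈ M₂(ℤ) : N | c} with q(X) = -det(X). The types of one-dimensional cusps H_{a,c} ⊆ L'/L ≅ (ℤ/Nℤ)² depend only on d = N/gcd(N,c); concretely, for coprime (a,c) with M = gcd(N,c), the type is the cyclic subgroup generated by ((N/M)a, 0) and (0, c) in (ℤ/Nℤ)², which equals ⟨(N/M, 0), (0, M)⟩, depending only on M. Consequently the number of types equals the number of divisors of N. -/

import Mathlib

open AddSubgroup

lemma closure_pair_eq_prod {G H : Type*} [AddGroup G] [AddGroup H] (u : G) (v : H) :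
    closure {((u, 0) : G × H), (0, v)} = (zmultiples u).prod (zmultiples v) := by
  apply le_antisymm
  · rw [closure_le]
    rintro x (rfl | rfl)
    · exact ⟨mem_zmultiples u, zero_mem _⟩
    · exact ⟨zero_mem _, mem_zmultiples v⟩
  · rintro ⟨x, y⟩ ⟨⟨m, rfl⟩, ⟨n, rfl⟩⟩
    have : (m • u, n • v) = m • ((u, 0) : G × H) + n • ((0, v) : G × H) := by
      simp [Prod.ext_iff]
    rw [this]
    exact add_mem (zsmul_mem (subset_closure (by simp)) m)
      (zsmul_mem (subset_closure (by simp)) n)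

lemma zmultiples_intCast_gcd (N : ℕ) (k : ℤ) :
    zmultiples ((k : ZMod N)) = zmultiples (((Int.gcd k N : ℤ) : ZMod N)) := by
  apply le_antisymm
  · rw [zmultiples_le]
    refine ⟨k / (Int.gcd k N : ℤ), ?_⟩
    have h : (k / (Int.gcd k N : ℤ)) * (Int.gcd k N : ℤ) = k :=
      Int.ediv_mul_cancel (Int.gcd_dvd_left k N)
    calc (k / (Int.gcd k N : ℤ)) • ((Int.gcd k N : ℤ) : ZMod N)
        = (((k / (Int.gcd k N : ℤ)) * (Int.gcd k N : ℤ) : ℤ) : ZMod N) := by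
          rw [zsmul_eq_mul]; push_cast; ring
      _ = (k : ZMod N) := by rw [h]
  · rw [zmultiples_le]
    refine ⟨Int.gcdA k N, ?_⟩
    have h : (Int.gcd k N : ℤ) = k * Int.gcdA k N + N * Int.gcdB k N := Int.gcd_eq_gcd_ab k N
    calc (Int.gcdA k N) • (k : ZMod N)
        = ((k * Int.gcdA k N : ℤ) : ZMod N) := by rw [zsmul_eq_mul]; push_cast; ring
      _ = ((k * Int.gcdA k N + N * Int.gcdB k N : ℤ) : ZMod N) := by push_cast; simp
      _ = _ := by rw [← h]

lemma zmultiples_intCast_congr (N : ℕ) {j k : ℤ} (h : Int.gcd j N = Int.gcd k N) :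
    zmultiples ((j : ZMod N)) = zmultiples ((k : ZMod N)) := by
  rw [zmultiples_intCast_gcd N j, zmultiples_intCast_gcd N k, h]

/-- The type of a cusp with invariant `M = gcd(N, c)`. -/
def cuspType (N M : ℕ) : AddSubgroup (ZMod N × ZMod N) :=
  (zmultiples (((N / M : ℕ) : ZMod N))).prod (zmultiples ((M : ZMod N)))

lemma gcd_key (N : ℕ) (a c : ℤ) (h : Int.gcd a c = 1) :
    Int.gcd ((N : ℤ) / (Nat.gcd N c.natAbs : ℤ) * a) N
      = Int.gcd ((N : ℤ) / (Nat.gcd N c.natAbs : ℤ)) N := by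
  set M : ℕ := Nat.gcd N c.natAbs with hM
  have hMN : (M : ℤ) ∣ (N : ℤ) := Int.natCast_dvd_natCast.mpr (Nat.gcd_dvd_left N c.natAbs)
  set d : ℤ := (N : ℤ) / (M : ℤ) with hd
  have hdM : d * (M : ℤ) = N := Int.ediv_mul_cancel hMN
  have hcop : Nat.Coprime a.natAbs M := by
    have h1 : Nat.Coprime a.natAbs c.natAbs := h
    exact Nat.Coprime.coprime_dvd_right (Nat.gcd_dvd_right N c.natAbs) h1
  have e1 : Int.gcd (d * a) N = d.natAbs * Int.gcd a M := by
    rw [← hdM, Int.gcd_mul_left]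
  have e2 : Int.gcd d N = d.natAbs * Int.gcd 1 (M : ℤ) := by
    rw [← hdM, ← Int.gcd_mul_left, mul_one]
  have e3 : Int.gcd a (M : ℤ) = 1 := by
    simpa [Int.gcd] using hcop
  rw [e1, e2, e3]
  simp [Int.gcd]

lemma gcd_key2 (N : ℕ) (c : ℤ) :
    Int.gcd c N = Int.gcd ((Nat.gcd N c.natAbs : ℤ)) N := by
  have h1 : Int.gcd c N = Nat.gcd N c.natAbs := by
    simp [Int.gcd, Nat.gcd_comm]
  have h2 : Int.gcd ((Nat.gcd N c.natAbs : ℤ)) N = Nat.gcd N c.natAbs := by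
    simp [Int.gcd, Nat.gcd_eq_left (Nat.gcd_dvd_left N c.natAbs)]
  rw [h1, h2]

lemma closure_eq_cuspType (N : ℕ) (a c : ℤ) (h : Int.gcd a c = 1) :
    AddSubgroup.closure
        { ((((N : ℤ) / (Nat.gcd N c.natAbs : ℤ) * a : ℤ) : ZMod N), (0 : ZMod N)),
          ((0 : ZMod N), (c : ZMod N)) } = cuspType N (Nat.gcd N c.natAbs) := by
  set M : ℕ := Nat.gcd N c.natAbs with hM
  rw [closure_pair_eq_prod]
  have e1 : ((((N : ℤ) / (M : ℤ)) : ℤ) : ZMod N) = (((N / M : ℕ) : ZMod N)) := by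
    rw [show ((N : ℤ) / (M : ℤ)) = ((N / M : ℕ) : ℤ) from rfl, Int.cast_natCast]
  have e2 : (((M : ℤ)) : ZMod N) = ((M : ZMod N)) := by push_cast; ring
  rw [zmultiples_intCast_congr N (gcd_key N a c h), zmultiples_intCast_congr N (gcd_key2 N c),
    e1, e2, cuspType]

lemma card_cuspType_snd (N M : ℕ) (hN : N ≠ 0) (hMN : M ∣ N) :
    Nat.card (zmultiples ((M : ZMod N))) = N / M := by
  rw [Nat.card_zmultiples, ZMod.addOrderOf_coe M hN, Nat.gcd_eq_right hMN]

/-- for `L = U ⊕ U(N)`, the type of the cusp `a/c` is the subgroup of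
`(ℤ/Nℤ)²` generated by `((N/M)a, 0)` and `(0, c)`, it equals `⟨(N/M, 0), (0, M)⟩` with
`M = gcd(N, c)`, and the number of types equals the number of divisors of `N`. -/
theorem stmt16 (N : ℕ) (hN : 0 < N) :
    (∀ a c : ℤ, Int.gcd a c = 1 → 0 ≤ c →
      AddSubgroup.closure
          { ((((N : ℤ) / (Nat.gcd N c.natAbs : ℤ) * a : ℤ) : ZMod N), (0 : ZMod N)),
            ((0 : ZMod N), (c : ZMod N)) } =
        AddSubgroup.closure
          { ((((N : ℤ) / (Nat.gcd N c.natAbs : ℤ) : ℤ) : ZMod N), (0 : ZMod N)),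
            ((0 : ZMod N), ((Nat.gcd N c.natAbs : ℤ) : ZMod N)) }) ∧
    Nat.card {H : AddSubgroup (ZMod N × ZMod N) |
      ∃ a c : ℤ, Int.gcd a c = 1 ∧ 0 ≤ c ∧
        H = AddSubgroup.closure
          { ((((N : ℤ) / (Nat.gcd N c.natAbs : ℤ) * a : ℤ) : ZMod N), (0 : ZMod N)),
            ((0 : ZMod N), (c : ZMod N)) }} = N.divisors.card := by
  classical
  constructor
  · intro a c h hc
    rw [closure_pair_eq_prod, closure_pair_eq_prod,
      zmultiples_intCast_congr N (gcd_key N a c h), zmultiples_intCast_congr N (gcd_key2 N c)]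
  · have hset : {H : AddSubgroup (ZMod N × ZMod N) |
        ∃ a c : ℤ, Int.gcd a c = 1 ∧ 0 ≤ c ∧
          H = AddSubgroup.closure
            { ((((N : ℤ) / (Nat.gcd N c.natAbs : ℤ) * a : ℤ) : ZMod N), (0 : ZMod N)),
              ((0 : ZMod N), (c : ZMod N)) }} = cuspType N '' ↑N.divisors := by
      ext H
      simp only [Set.mem_setOf_eq, Set.mem_image, Finset.coe_sort_coe, Finset.mem_coe,
        Nat.mem_divisors]
      constructor
      · rintro ⟨a, c, h1, _, rfl⟩
        exact ⟨Nat.gcd N c.natAbs, ⟨Nat.gcd_dvd_left N c.natAbs, hN.ne'⟩,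
          (closure_eq_cuspType N a c h1).symm⟩
      · rintro ⟨M, ⟨hMN, _⟩, rfl⟩
        refine ⟨1, (M : ℤ), by simp [Int.gcd], Int.natCast_nonneg M, ?_⟩
        have hg : Nat.gcd N (M : ℤ).natAbs = M := by
          simpa using Nat.gcd_eq_right hMN
        rw [closure_eq_cuspType N 1 (M : ℤ) (by simp [Int.gcd]), hg]
    rw [hset, ← Finset.coe_image, Nat.card_coe_set_eq, Set.ncard_coe_finset]
    rw [Finset.card_image_of_injOn]
    intro M hM M' hM' hEq
    simp only [Finset.mem_coe, Nat.mem_divisors] at hM hM'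
    have hsnd : zmultiples ((M : ZMod N)) = zmultiples ((M' : ZMod N)) := by
      ext y
      have := AddSubgroup.ext_iff.mp hEq (0, y)
      simpa [cuspType, AddSubgroup.mem_prod, zero_mem] using this
    have hcard : N / M = N / M' := by
      rw [← card_cuspType_snd N M hN.ne' hM.1, ← card_cuspType_snd N M' hN.ne' hM'.1, hsnd]
    have h1 : N / (N / M) = M := Nat.div_div_self hM.1 hN.ne'
    have h2 : N / (N / M') = M' := Nat.div_div_self hM'.1 hN.ne'
    rw [← h1, ← h2, hcard]
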